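/- For k ∈ (0,1), the complete elliptic integral of the second kind satisfies E'(k) = (E(k) − K(k))/k, where K and E are the complete elliptic integrals of the first and second kind. -/

import Mathlib

open MeasureTheory intervalIntegral Metric Set Real

/-- Complete elliptic integral of the first kind. -/
noncomputable def ellK (k : ℝ) : ℝ :=
  ∫ t in (0:ℝ)..1, 1 / Real.sqrt ((1 - t ^ 2) * (1 - k ^ 2 * t ^ 2))

/-- Complete elliptic integral of the second kind. -/
noncomputable def ellE (k : ℝ) : ℝ :=
  ∫ t in (0:ℝ)..1, Real.sqrt ((1 - k ^ 2 * t ^ 2) / (1 - t ^ 2))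

lemma aux_rpow_int : IntervalIntegrable (fun t : ℝ => (1 - t) ^ (-(1/2) : ℝ)) volume 0 1 := by
  have h := intervalIntegral.intervalIntegrable_rpow' (a := 0) (b := 1) (r := -(1/2))
    (by norm_num)
  simpa using (h.comp_sub_left 1).symm

lemma aux_rpow_int_mul (c : ℝ) :
    IntervalIntegrable (fun t : ℝ => c * (1 - t) ^ (-(1/2) : ℝ)) volume 0 1 :=
  aux_rpow_int.const_mul c

lemma aux_one_div_sqrt (t : ℝ) (ht : t ∈ Set.Ioo (0:ℝ) 1) :
    (1 - t) ^ (-(1/2) : ℝ) = 1 / Real.sqrt (1 - t) := by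
  rw [Real.rpow_neg (by linarith [ht.2] : (0:ℝ) ≤ 1 - t), ← Real.sqrt_eq_rpow, one_div]

set_option maxHeartbeats 2000000 in
/-- dE/dk = (E(k) - K(k))/k for k ∈ (0,1). -/
theorem ellE_hasDerivAt (k : ℝ) (hk : k ∈ Set.Ioo (0:ℝ) 1) :
    HasDerivAt ellE ((ellE k - ellK k) / k) k := by
  obtain ⟨hk0, hk1⟩ := hk
  set ε : ℝ := min k (1 - k) / 2 with hεdef
  have hε0 : 0 < ε := by
    have := lt_min hk0 (by linarith : (0:ℝ) < 1 - k)
    positivity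
  set M : ℝ := (1 + k) / 2 with hMdef
  have hM1 : M < 1 := by rw [hMdef]; linarith
  have hM0 : 0 < M := by rw [hMdef]; linarith
  have hMsq : 0 < 1 - M ^ 2 := by nlinarith
  have hball : ∀ x ∈ ball k ε, 0 < x ∧ x ≤ M := by
    intro x hx
    rw [mem_ball, Real.dist_eq, abs_lt] at hx
    constructor
    · have : ε ≤ k / 2 := by
        rw [hεdef]; gcongr; exact min_le_left _ _
      linarith [hx.1]
    · have : ε ≤ (1 - k) / 2 := by
        rw [hεdef]; gcongr; exact min_le_right _ _
      rw [hMdef]; linarith [hx.2]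
  -- the parametric family and its derivative
  set F : ℝ → ℝ → ℝ := fun x t => Real.sqrt ((1 - x ^ 2 * t ^ 2) / (1 - t ^ 2)) with hF
  set F' : ℝ → ℝ → ℝ :=
    fun x t => -(x * t ^ 2) / (Real.sqrt (1 - x ^ 2 * t ^ 2) * Real.sqrt (1 - t ^ 2)) with hF'
  set bound : ℝ → ℝ := fun t => (M / Real.sqrt (1 - M ^ 2)) * (1 - t) ^ (-(1/2) : ℝ)
    with hbounddef
  have hae : ∀ᵐ t : ℝ ∂volume, t ∈ Set.Ioo (0:ℝ) 1 ∨ ¬ t ∈ Set.uIoc (0:ℝ) 1 := by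
    have h1 : ∀ᵐ t : ℝ ∂volume, t ≠ 1 := by
      rw [ae_iff]
      have : {a : ℝ | ¬ a ≠ 1} = {1} := by ext a; simp
      rw [this]; exact measure_singleton 1
    filter_upwards [h1] with t ht
    by_cases h : t ∈ Set.uIoc (0:ℝ) 1
    · left
      rw [Set.uIoc_of_le (by norm_num : (0:ℝ) ≤ 1)] at h
      exact ⟨h.1, lt_of_le_of_ne h.2 ht⟩
    · right; exact h
  have meas : ∀ x : ℝ, AEStronglyMeasurable (F x) (volume.restrict (Set.uIoc (0:ℝ) 1)) := by
    intro x
    apply Measurable.aestronglyMeasurable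
    fun_prop
  have measF' : AEStronglyMeasurable (F' k) (volume.restrict (Set.uIoc (0:ℝ) 1)) := by
    apply Measurable.aestronglyMeasurable
    fun_prop
  -- integrability of F k  (the E integrand)
  have hEint : IntervalIntegrable (F k) volume 0 1 := by
    refine (aux_rpow_int_mul 1).mono_fun (meas k) ?_
    rw [Filter.EventuallyLE, ae_restrict_iff' measurableSet_uIoc]
    filter_upwards [hae] with t ht htI
    rcases ht with ht | ht
    swap
    · exact absurd htI ht
    obtain ⟨ht0, ht1⟩ := ht
    have h1t : (0:ℝ) < 1 - t := by linarith
    have h1t2 : (0:ℝ) < 1 - t ^ 2 := by nlinarith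
    have hnum : 1 - k ^ 2 * t ^ 2 ≤ 1 := by nlinarith
    simp only [one_mul, Real.norm_eq_abs, hF]
    rw [abs_of_nonneg (Real.sqrt_nonneg _), aux_one_div_sqrt t ⟨ht0, ht1⟩,
      abs_of_nonneg (by positivity), Real.sqrt_div' _ (le_of_lt h1t2),
      div_le_div_iff₀ (Real.sqrt_pos.2 h1t2) (Real.sqrt_pos.2 h1t)]
    have hA : Real.sqrt (1 - k ^ 2 * t ^ 2) ≤ 1 := Real.sqrt_le_one.2 (by nlinarith)
    have hB : Real.sqrt (1 - t) ≤ Real.sqrt (1 - t ^ 2) := Real.sqrt_le_sqrt (by nlinarith)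
    exact mul_le_mul hA hB (Real.sqrt_nonneg _) one_pos.le
  -- integrability of the K integrand
  have hKint : IntervalIntegrable
      (fun t => 1 / Real.sqrt ((1 - t ^ 2) * (1 - k ^ 2 * t ^ 2))) volume 0 1 := by
    have hksq : (0:ℝ) < 1 - k ^ 2 := by nlinarith
    refine (aux_rpow_int_mul (1 / Real.sqrt (1 - k ^ 2))).mono_fun
      (Measurable.aestronglyMeasurable (by fun_prop)) ?_
    rw [Filter.EventuallyLE, ae_restrict_iff' measurableSet_uIoc]
    filter_upwards [hae] with t ht htI
    rcases ht with ht | ht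
    swap
    · exact absurd htI ht
    obtain ⟨ht0, ht1⟩ := ht
    have h1t : (0:ℝ) < 1 - t := by linarith
    have hkt : (0:ℝ) < 1 - k ^ 2 * t ^ 2 := by
      nlinarith [mul_pos (show (0:ℝ) < 1 - k * t by nlinarith)
        (show (0:ℝ) < 1 + k * t by nlinarith)]
    have h1t2 : (0:ℝ) < 1 - t ^ 2 := by nlinarith
    simp only [Real.norm_eq_abs]
    rw [aux_one_div_sqrt t ⟨ht0, ht1⟩, abs_of_nonneg (by positivity),
      abs_of_nonneg (by positivity), div_mul_div_comm, one_mul]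
    apply one_div_le_one_div_of_le (by positivity)
    rw [← Real.sqrt_mul (le_of_lt hksq)]
    apply Real.sqrt_le_sqrt
    have e1 : 1 - k ^ 2 ≤ 1 - k ^ 2 * t ^ 2 := by nlinarith [sq_nonneg k]
    have e2 : 1 - t ≤ 1 - t ^ 2 := by nlinarith
    nlinarith [mul_le_mul e1 e2 h1t.le hkt.le]
  -- the main dominated-derivative lemma
  have key := intervalIntegral.hasDerivAt_integral_of_dominated_loc_of_deriv_le
    (F := F) (F' := F') (x₀ := k) (a := 0) (b := 1) (bound := bound)
    (μ := volume) (ball_mem_nhds k hε0)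
    (Filter.Eventually.of_forall fun x => meas x) hEint measF' ?_ ?_ ?_
  · obtain ⟨hF'int, hderiv⟩ := key
    have hEfun : (fun x => ∫ t in (0:ℝ)..1, F x t) = ellE := by
      funext x; rfl
    rw [hEfun] at hderiv
    -- identify the derivative value
    have hkD : ellE k - ellK k = k * ∫ t in (0:ℝ)..1, F' k t := by
      rw [← intervalIntegral.integral_const_mul]
      rw [ellE, ellK, ← intervalIntegral.integral_sub hEint hKint]
      apply intervalIntegral.integral_congr_ae
      filter_upwards [hae] with t ht htI
      rcases ht with ht | ht
      swap
      · exact absurd htI ht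
      obtain ⟨ht0, ht1⟩ := ht
      have hkt : (0:ℝ) < 1 - k ^ 2 * t ^ 2 := by
        nlinarith [mul_pos (show (0:ℝ) < 1 - k * t by nlinarith)
          (show (0:ℝ) < 1 + k * t by nlinarith)]
      have h1t2 : (0:ℝ) < 1 - t ^ 2 := by nlinarith
      have hs1 : Real.sqrt (1 - k ^ 2 * t ^ 2) ≠ 0 := by positivity
      have hs2 : Real.sqrt (1 - t ^ 2) ≠ 0 := by positivity
      have hsq1 : Real.sqrt (1 - k ^ 2 * t ^ 2) ^ 2 = 1 - k ^ 2 * t ^ 2 :=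
        Real.sq_sqrt hkt.le
      have hsq2 : Real.sqrt (1 - t ^ 2) ^ 2 = 1 - t ^ 2 := Real.sq_sqrt h1t2.le
      simp only [hF, hF']
      rw [Real.sqrt_div' _ h1t2.le, Real.sqrt_mul h1t2.le]
      field_simp
      linear_combination hsq1
    have : (ellE k - ellK k) / k = ∫ t in (0:ℝ)..1, F' k t := by
      rw [hkD, mul_div_cancel_left₀ _ (ne_of_gt hk0)]
    rw [this]
    exact hderiv
  · -- bound on F'
    filter_upwards [hae] with t ht htI x hx
    rcases ht with ht | ht
    swap
    · exact absurd htI ht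
    obtain ⟨ht0, ht1⟩ := ht
    obtain ⟨hx0, hxM⟩ := hball x hx
    have hx2 : x ^ 2 ≤ M ^ 2 := by nlinarith
    have ht2 : t ^ 2 ≤ 1 := by nlinarith
    have hxt : x ^ 2 * t ^ 2 ≤ M ^ 2 := by
      nlinarith [mul_le_mul hx2 ht2 (sq_nonneg t) (by positivity : (0:ℝ) ≤ M ^ 2)]
    have hkt : (0:ℝ) < 1 - x ^ 2 * t ^ 2 := by nlinarith
    have h1t : (0:ℝ) < 1 - t := by linarith
    have h1t2 : (0:ℝ) < 1 - t ^ 2 := by nlinarith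
    simp only [hF', hbounddef, Real.norm_eq_abs]
    rw [abs_div, abs_neg, abs_of_nonneg (by positivity : (0:ℝ) ≤ x * t ^ 2),
      abs_of_nonneg (by positivity : (0:ℝ) ≤ Real.sqrt _ * Real.sqrt _),
      aux_one_div_sqrt t ⟨ht0, ht1⟩, div_mul_div_comm]
    apply div_le_div₀ (by positivity) (by nlinarith) (by positivity)
    exact mul_le_mul (Real.sqrt_le_sqrt (by nlinarith)) (Real.sqrt_le_sqrt (by nlinarith))
      (Real.sqrt_nonneg _) (Real.sqrt_nonneg _)
  · exact aux_rpow_int_mul _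
  · -- differentiability
    filter_upwards [hae] with t ht htI x hx
    rcases ht with ht | ht
    swap
    · exact absurd htI ht
    obtain ⟨ht0, ht1⟩ := ht
    obtain ⟨hx0, hxM⟩ := hball x hx
    have hx2 : x ^ 2 ≤ M ^ 2 := by nlinarith
    have ht2 : t ^ 2 ≤ 1 := by nlinarith
    have hxt : x ^ 2 * t ^ 2 ≤ M ^ 2 := by
      nlinarith [mul_le_mul hx2 ht2 (sq_nonneg t) (by positivity : (0:ℝ) ≤ M ^ 2)]
    have hkt : (0:ℝ) < 1 - x ^ 2 * t ^ 2 := by nlinarith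
    have h1t2 : (0:ℝ) < 1 - t ^ 2 := by nlinarith
    have hFeq : (fun y => F y t)
        = fun y => Real.sqrt (1 - y ^ 2 * t ^ 2) / Real.sqrt (1 - t ^ 2) := by
      funext y
      simp only [hF]
      exact Real.sqrt_div' _ h1t2.le
    rw [hFeq]
    have hinner : HasDerivAt (fun y : ℝ => 1 - y ^ 2 * t ^ 2) (-(2 * x * t ^ 2)) x := by
      have := ((hasDerivAt_pow 2 x).mul_const (t ^ 2)).const_sub 1
      exact this.congr_deriv (by norm_num)
    have hsqrt := hinner.sqrt (ne_of_gt hkt)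
    have := hsqrt.div_const (Real.sqrt (1 - t ^ 2))
    refine this.congr_deriv ?_
    symm
    simp only [hF']
    have hs1 : Real.sqrt (1 - x ^ 2 * t ^ 2) ≠ 0 := by positivity
    have hs2 : Real.sqrt (1 - t ^ 2) ≠ 0 := by positivity
    field_simp
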